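/- arXiv:1806.03180 — 3 statements merged into one kernel-verified Lean document; each statement's English description precedes it below -/
import Mathlib

section
/- Let k be a number field, n ≥ 1 an integer, and F ∈ k[x₀,…,x_n] a nonzero homogeneous polynomial of degree e ≥ 1. For each place v of k let n_v be a non-negative real number, with n_v = 0 for all but finitely many places v. Then the set of points Q ∈ ℙⁿ(k) with F(Q) ≠ 0 (for some, equivalently any, choice of homogeneous coordinates) such that log(‖Q‖_v^e / |F(Q)|_v) ≤ n_v for every place v of k (where the quantity is computed from one fixed choice of homogeneous coordinates of Q, being independent of that choice) is finite. (This is the instance of the theorem that a very ample divisor admits no infinite everywhere-integral set, for X = ℙⁿ and D the hypersurface F = 0.) -/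
open NumberField IsDedekindDomain

/-- The finite places of a number field `K`: the nonzero prime ideals of its ring of
integers. -/
abbrev FinPlace (K : Type) [Field K] [NumberField K] := HeightOneSpectrum (𝓞 K)

/-- The places of a number field `K`: either a finite place or an infinite place (the
latter arising from an embedding of `K` into `ℂ`). -/
abbrev Place (K : Type) [Field K] [NumberField K] :=
  FinPlace K ⊕ NumberField.InfinitePlace K

/-- The normalized `v`-adic absolute value attached to a finite place `v` of `K`:
`|x|_v = (N 𝔭)^(-ord_v x)` where `N 𝔭` is the absolute norm of the prime ideal. -/
noncomputable def finAbs {K : Type} [Field K] [NumberField K] (v : FinPlace K) (x : K) : ℝ :=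
  (WithZeroMulInt.toNNReal (e := (Ideal.absNorm v.asIdeal : NNReal))
    (by
      refine Nat.cast_ne_zero (R := NNReal) |>.mpr ?_
      simpa [Ideal.absNorm_eq_zero_iff] using v.ne_bot)
    (v.valuation K x) : ℝ)

/-- The absolute value `|·|_v` attached to a place `v` of `K`: the normalized `𝔭`-adic
absolute value at a finite place, and the absolute value induced by the corresponding
embedding at an infinite place. -/
noncomputable def placeAbs {K : Type} [Field K] [NumberField K] : Place K → K → ℝ
  | .inl v => finAbs v
  | .inr w => fun x => w x

namespace AuxEverywhereIntegral

open scoped nonZeroDivisors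

variable {K : Type} [Field K] [NumberField K]

lemma one_lt_absNorm (v : FinPlace K) : (1 : NNReal) < (Ideal.absNorm v.asIdeal : NNReal) := by
  have h0 : Ideal.absNorm v.asIdeal ≠ 0 := by
    simpa [Ideal.absNorm_eq_zero_iff] using v.ne_bot
  have h1 : Ideal.absNorm v.asIdeal ≠ 1 := fun h =>
    v.isPrime.ne_top (Ideal.absNorm_eq_one_iff.mp h)
  rw [← Nat.cast_one, Nat.cast_lt]
  omega

lemma finAbs_nonneg (v : FinPlace K) (x : K) : 0 ≤ finAbs v x := NNReal.coe_nonneg _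

lemma finAbs_mul (v : FinPlace K) (x y : K) : finAbs v (x * y) = finAbs v x * finAbs v y := by
  simp [finAbs, map_mul]

lemma finAbs_pow (v : FinPlace K) (x : K) (m : ℕ) : finAbs v (x ^ m) = finAbs v x ^ m := by
  simp [finAbs, map_pow]

lemma finAbs_div (v : FinPlace K) (x y : K) : finAbs v (x / y) = finAbs v x / finAbs v y := by
  simp [finAbs, map_div₀]

lemma finAbs_pos (v : FinPlace K) {x : K} (hx : x ≠ 0) : 0 < finAbs v x := by
  have : v.valuation K x ≠ 0 := (Valuation.ne_zero_iff _).mpr hx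
  exact_mod_cast WithZeroMulInt.toNNReal_pos _ this

lemma finAbs_le_one_iff (v : FinPlace K) (x : K) : finAbs v x ≤ 1 ↔ v.valuation K x ≤ 1 := by
  rw [finAbs, show (1 : ℝ) = ((1 : NNReal) : ℝ) by norm_num, NNReal.coe_le_coe]
  exact WithZeroMulInt.toNNReal_le_one_iff (one_lt_absNorm v)

lemma placeAbs_nonneg (v : Place K) (x : K) : 0 ≤ placeAbs v x := by
  cases v with
  | inl v => exact finAbs_nonneg v x
  | inr w => exact apply_nonneg w x

lemma placeAbs_mul (v : Place K) (x y : K) :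
    placeAbs v (x * y) = placeAbs v x * placeAbs v y := by
  cases v with
  | inl v => exact finAbs_mul v x y
  | inr w => exact map_mul w x y

lemma placeAbs_pow (v : Place K) (x : K) (m : ℕ) :
    placeAbs v (x ^ m) = placeAbs v x ^ m := by
  cases v with
  | inl v => exact finAbs_pow v x m
  | inr w => exact map_pow w x m

lemma placeAbs_div (v : Place K) (x y : K) :
    placeAbs v (x / y) = placeAbs v x / placeAbs v y := by
  cases v with
  | inl v => exact finAbs_div v x y
  | inr w => exact map_div₀ w x y

lemma placeAbs_pos (v : Place K) {x : K} (hx : x ≠ 0) : 0 < placeAbs v x := by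
  cases v with
  | inl v => exact finAbs_pos v hx
  | inr w => exact NumberField.InfinitePlace.pos_iff.mpr hx

/-- An element whose valuation is at most one at every finite place is an algebraic
integer. -/
lemma isIntegral_of_valuation_le_one (x : K)
    (h : ∀ v : FinPlace K, v.valuation K x ≤ 1) : IsIntegral ℤ x := by
  have hx : x ∈ (⊥ : Subalgebra (𝓞 K) K) := by
    rw [← HeightOneSpectrum.iInf_localization_eq_bot (𝓞 K) K, Algebra.mem_iInf]
    intro v
    obtain ⟨a, s, rfl⟩ := IsLocalization.exists_mk'_eq (𝓞 K)⁰ x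
    have hv := h v
    rw [v.valuation_of_mk'] at hv
    set b : 𝓞 K := (s : 𝓞 K) with hbdef
    have hb : b ≠ 0 := nonZeroDivisors.coe_ne_zero s
    have hs0 : v.intValuation b ≠ 0 := HeightOneSpectrum.intValuation_ne_zero v b hb
    have hav : v.intValuation a ≤ v.intValuation b := by
      rwa [div_le_one₀ (zero_lt_iff.mpr hs0)] at hv
    obtain ⟨m, hm⟩ := WithZero.ne_zero_iff_exists.mp hs0
    have hb1 : v.intValuation b ≤ 1 := v.intValuation_le_one b
    have hmneg : Multiplicative.toAdd m ≤ 0 := by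
      rw [← hm] at hb1
      rw [show (1 : WithZero (Multiplicative ℤ)) =
          ((1 : Multiplicative ℤ) : WithZero (Multiplicative ℤ)) from rfl,
        WithZero.coe_le_coe] at hb1
      exact Multiplicative.toAdd_le.mpr hb1
    set n : ℕ := (-Multiplicative.toAdd m).toNat with hndef
    have hmn : m = Multiplicative.ofAdd (-(n : ℤ)) := by
      have h1 : ((n : ℤ)) = -Multiplicative.toAdd m := Int.toNat_of_nonneg (neg_nonneg.mpr hmneg)
      rw [h1, neg_neg, ofAdd_toAdd]
    have hbval : v.intValuation b ≤ Multiplicative.ofAdd (-(n : ℤ)) := by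
      rw [← hm, hmn]
    have hbn : v.asIdeal ^ n ∣ Ideal.span {b} :=
      (HeightOneSpectrum.intValuation_le_pow_iff_dvd v b n).mp hbval
    have han : v.asIdeal ^ n ∣ Ideal.span {a} :=
      (HeightOneSpectrum.intValuation_le_pow_iff_dvd v a n).mp (le_trans hav hbval)
    have hbn1 : ¬ v.asIdeal ^ (n + 1) ∣ Ideal.span {b} := by
      intro hdvd
      have hle := (HeightOneSpectrum.intValuation_le_pow_iff_dvd v b (n + 1)).mpr hdvd
      rw [← hm, hmn] at hle
      replace hle := WithZero.coe_le_coe.mp hle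
      have h2 := Multiplicative.toAdd_le.mpr hle
      simp only [toAdd_ofAdd] at h2
      omega
    obtain ⟨J, hJ⟩ := hbn
    have hJv : ¬ J ≤ v.asIdeal := by
      intro hle
      exact hbn1 (by
        rw [hJ, pow_succ]
        exact mul_dvd_mul_left _ (Ideal.dvd_iff_le.mpr hle))
    obtain ⟨t, htJ, htv⟩ := SetLike.not_le_iff_exists.mp hJv
    obtain ⟨J', hJ'⟩ := han
    have hdvd : Ideal.span {b} ∣ Ideal.span ({t * a} : Set (𝓞 K)) := by
      rw [hJ, ← Ideal.span_singleton_mul_span_singleton, hJ',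
        show Ideal.span {t} * (v.asIdeal ^ n * J') = v.asIdeal ^ n * (Ideal.span {t} * J') by ring]
      exact mul_dvd_mul_left _ (dvd_mul_of_dvd_left
        (Ideal.dvd_iff_le.mpr ((Ideal.span_le).mpr (Set.singleton_subset_iff.mpr htJ))) J')
    have hba : b ∣ t * a := by
      rwa [Ideal.dvd_iff_le, Ideal.span_singleton_le_span_singleton] at hdvd
    obtain ⟨cc, hcc⟩ := hba
    refine ⟨cc, t, htv, ?_⟩
    have ht0 : t ≠ 0 := fun h0 => htv (h0 ▸ v.asIdeal.zero_mem)
    have hinj := IsFractionRing.injective (𝓞 K) K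
    have hbK : algebraMap (𝓞 K) K b ≠ 0 := fun h0 => hb (hinj (by simpa using h0))
    have htK : algebraMap (𝓞 K) K t ≠ 0 := fun h0 => ht0 (hinj (by simpa using h0))
    rw [IsFractionRing.mk'_eq_div]
    have hccK := congrArg (algebraMap (𝓞 K) K) hcc
    push_cast [map_mul] at hccK
    field_simp
    linear_combination hccK
  obtain ⟨y, hy⟩ := Algebra.mem_bot.mp hx
  rw [← hy]
  exact IsIntegral.algebraMap (NumberField.RingOfIntegers.isIntegral y)

/-- The key local bound: `|d·qᵢ·qⱼ^f / F₀|_v ≤ |d|_v · exp c_v`. -/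
lemma key_bound {ι : Type*} [Fintype ι] [Nonempty ι] (v : Place K) (q : ι → K) (F0 : K)
    (hF0 : F0 ≠ 0) (f : ℕ) (cv : ℝ)
    (hlog : Real.log ((⨆ i, placeAbs v (q i)) ^ (f + 1) / placeAbs v F0) ≤ cv)
    (dd : K) (i j : ι) :
    placeAbs v (dd * q i * q j ^ f / F0) ≤ placeAbs v dd * Real.exp cv := by
  set s := ⨆ i, placeAbs v (q i) with hs
  have hsn : ∀ i, placeAbs v (q i) ≤ s := fun i =>
    le_ciSup (f := fun i => placeAbs v (q i)) (Set.Finite.bddAbove (Set.finite_range _)) i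
  have hs0 : 0 ≤ s := le_trans (placeAbs_nonneg _ _) (hsn (Classical.arbitrary ι))
  have hF0p : 0 < placeAbs v F0 := placeAbs_pos v hF0
  have key : s ^ (f + 1) ≤ Real.exp cv * placeAbs v F0 := by
    rcases (pow_nonneg hs0 (f + 1)).eq_or_lt with h | h
    · exact le_trans h.symm.le (le_of_lt (mul_pos (Real.exp_pos _) hF0p))
    · have hx : 0 < s ^ (f + 1) / placeAbs v F0 := div_pos h hF0p
      have h2 := (Real.log_le_iff_le_exp hx).mp hlog
      rw [div_le_iff₀ hF0p] at h2
      linarith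
  have h1 : placeAbs v (q i) * placeAbs v (q j) ^ f ≤ s ^ (f + 1) := by
    rw [pow_succ']
    exact mul_le_mul (hsn i) (pow_le_pow_left₀ (placeAbs_nonneg _ _) (hsn j) f)
      (pow_nonneg (placeAbs_nonneg _ _) f) hs0
  have hdd : 0 ≤ placeAbs v dd := placeAbs_nonneg v dd
  calc placeAbs v (dd * q i * q j ^ f / F0)
      = placeAbs v dd * (placeAbs v (q i) * placeAbs v (q j) ^ f) / placeAbs v F0 := by
        rw [placeAbs_div, placeAbs_mul, placeAbs_mul, placeAbs_pow, mul_assoc]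
    _ ≤ placeAbs v dd * (Real.exp cv * placeAbs v F0) / placeAbs v F0 := by
        apply div_le_div_of_nonneg_right ?_ hF0p.le
        exact mul_le_mul_of_nonneg_left (h1.trans key) hdd
    _ = placeAbs v dd * Real.exp cv := by
        rw [show placeAbs v dd * (Real.exp cv * placeAbs v F0)
            = placeAbs v dd * Real.exp cv * placeAbs v F0 by ring,
          mul_div_assoc, div_self hF0p.ne', mul_one]

lemma finAbs_le_of_mem_pow (v : FinPlace K) (d0 : 𝓞 K) (N : ℕ)
    (hmem : d0 ∈ v.asIdeal ^ N) :
    finAbs v (algebraMap (𝓞 K) K d0) ≤ (((Ideal.absNorm v.asIdeal : NNReal) : ℝ) ^ N)⁻¹ := by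
  have hdvd : v.asIdeal ^ N ∣ Ideal.span {d0} := by
    rw [Ideal.dvd_iff_le, Ideal.span_le, Set.singleton_subset_iff]
    exact hmem
  have hval : v.intValuationDef d0 ≤ Multiplicative.ofAdd (-(N : ℤ)) :=
    (HeightOneSpectrum.intValuation_le_pow_iff_dvd v d0 N).mpr hdvd
  have hval' : v.valuation K (algebraMap (𝓞 K) K d0) ≤
      ((Multiplicative.ofAdd (-(N : ℤ)) : Multiplicative ℤ) : WithZero (Multiplicative ℤ)) := by
    rw [HeightOneSpectrum.valuation_of_algebraMap]
    exact hval
  have hmono := (WithZeroMulInt.toNNReal_strictMono (one_lt_absNorm v)).monotone hval'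
  have hcoe : WithZeroMulInt.toNNReal (ne_zero_of_lt (one_lt_absNorm v))
      ((Multiplicative.ofAdd (-(N : ℤ)) : Multiplicative ℤ) : WithZero (Multiplicative ℤ)) =
      (Ideal.absNorm v.asIdeal : NNReal) ^ (-(N : ℤ)) := by
    rw [WithZeroMulInt.toNNReal_neg_apply _ (WithZero.coe_ne_zero)]
    rfl
  rw [finAbs]
  have hfin := hmono.trans_eq hcoe
  calc ((WithZeroMulInt.toNNReal _ (v.valuation K (algebraMap (𝓞 K) K d0)) : NNReal) : ℝ)
      ≤ (((Ideal.absNorm v.asIdeal : NNReal) ^ (-(N : ℤ)) : NNReal) : ℝ) := by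
        exact_mod_cast hfin
    _ = (((Ideal.absNorm v.asIdeal : NNReal) : ℝ) ^ N)⁻¹ := by
        push_cast [zpow_neg]
        norm_num

open scoped Classical in
/-- The auxiliary map sending a point of projective space to the tuple of the values
`d·qᵢ·qⱼ^f / F(q)` computed from a chosen set of homogeneous coordinates. -/
noncomputable def zmap {m : ℕ} (F : MvPolynomial (Fin m) K) (c : Place K → ℝ) (d : K) (f : ℕ)
    (Q : Projectivization K (Fin m → K)) : Fin m × Fin m → K :=
  if h : ∃ (q : Fin m → K) (hq : q ≠ 0), Projectivization.mk K q hq = Q ∧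
      MvPolynomial.eval q F ≠ 0 ∧
      ∀ v : Place K,
        Real.log ((⨆ i, placeAbs v (q i)) ^ (f + 1) / placeAbs v (MvPolynomial.eval q F)) ≤ c v
  then fun p => d * h.choose p.1 * h.choose p.2 ^ f / MvPolynomial.eval h.choose F
  else 0

end AuxEverywhereIntegral

open AuxEverywhereIntegral in
/-- Let `k` be a number field, `n ≥ 1`, and `F ∈ k[x₀,…,x_n]` a nonzero
homogeneous polynomial of degree `e ≥ 1`. For each place `v` of `k` let `n_v ≥ 0`, with
`n_v = 0` for all but finitely many places. Then the set of points `Q ∈ ℙⁿ(k)` with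
`F(Q) ≠ 0` such that `log (‖Q‖_v^e / |F(Q)|_v) ≤ n_v` for every place `v` (computed from
one choice of homogeneous coordinates of `Q`, being independent of that choice) is
finite. -/
theorem finite_everywhere_integral_points_hypersurface_complement
    (K : Type) [Field K] [NumberField K] (n : ℕ) (hn : 1 ≤ n)
    (F : MvPolynomial (Fin (n + 1)) K) (hF : F ≠ 0)
    (e : ℕ) (he : 1 ≤ e) (hFhom : F.IsHomogeneous e)
    (c : Place K → ℝ) (hc0 : ∀ v, 0 ≤ c v) (hcfin : {v : Place K | c v ≠ 0}.Finite) :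
    {Q : Projectivization K (Fin (n + 1) → K) |
      ∃ (q : Fin (n + 1) → K) (hq : q ≠ 0), Projectivization.mk K q hq = Q ∧
        MvPolynomial.eval q F ≠ 0 ∧
        ∀ v : Place K,
          Real.log ((⨆ i, placeAbs v (q i)) ^ e / placeAbs v (MvPolynomial.eval q F)) ≤
            c v}.Finite := by
  classical
  obtain ⟨f, rfl⟩ : ∃ f, e = f + 1 := ⟨e - 1, by omega⟩
  -- the finite set of finite places where `c` is nonzero
  have htfin : {v : FinPlace K | c (.inl v) ≠ 0}.Finite :=
    hcfin.preimage (Sum.inl_injective.injOn)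
  set t : Finset (FinPlace K) := htfin.toFinset with htdef
  -- choose exponents making the norms large
  have hexp : ∀ v : FinPlace K, ∃ N : ℕ,
      Real.exp (c (.inl v)) ≤ ((Ideal.absNorm v.asIdeal : NNReal) : ℝ) ^ N := by
    intro v
    obtain ⟨N, hN⟩ := pow_unbounded_of_one_lt (Real.exp (c (.inl v)))
      (show (1 : ℝ) < ((Ideal.absNorm v.asIdeal : NNReal) : ℝ) by
        exact_mod_cast one_lt_absNorm v)
    exact ⟨N, hN.le⟩
  choose N hN using hexp
  -- choose a nonzero element in each bad prime and multiply them up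
  have hpick : ∀ v : FinPlace K, ∃ a : 𝓞 K, a ∈ v.asIdeal ∧ a ≠ 0 :=
    fun v => Submodule.exists_mem_ne_zero_of_ne_bot v.ne_bot
  choose aa haa haa0 using hpick
  set d0 : 𝓞 K := ∏ v ∈ t, aa v ^ N v with hd0def
  have hd00 : d0 ≠ 0 := by
    rw [hd0def]
    exact Finset.prod_ne_zero_iff.mpr (fun v _ => pow_ne_zero _ (haa0 v))
  set d : K := algebraMap (𝓞 K) K d0 with hddef
  have hdK : d ≠ 0 := by
    rw [hddef]
    exact fun h0 => hd00 (IsFractionRing.injective (𝓞 K) K (by simpa using h0))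
  have hd1 : ∀ v : FinPlace K, finAbs v d ≤ 1 := fun v =>
    (finAbs_le_one_iff v d).mpr (v.valuation_le_one (K := K) d0)
  have hd2 : ∀ v : FinPlace K, finAbs v d * Real.exp (c (.inl v)) ≤ 1 := by
    intro v
    by_cases hv : v ∈ t
    · have hmem : d0 ∈ v.asIdeal ^ N v := by
        rw [hd0def, ← Finset.mul_prod_erase _ _ hv]
        exact Ideal.mul_mem_right _ _ (Ideal.pow_mem_pow (haa v) (N v))
      have h1 := finAbs_le_of_mem_pow v d0 (N v) hmem
      have h2 := hN v
      have hpos : (0 : ℝ) < ((Ideal.absNorm v.asIdeal : NNReal) : ℝ) ^ N v := by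
        apply pow_pos
        have := one_lt_absNorm v
        exact_mod_cast lt_trans one_pos this
      calc finAbs v d * Real.exp (c (.inl v))
          ≤ (((Ideal.absNorm v.asIdeal : NNReal) : ℝ) ^ N v)⁻¹ *
            (((Ideal.absNorm v.asIdeal : NNReal) : ℝ) ^ N v) :=
            mul_le_mul h1 h2 (Real.exp_pos _).le (inv_nonneg.mpr hpos.le)
        _ = 1 := inv_mul_cancel₀ hpos.ne'
    · have hc : c (.inl v) = 0 := by
        by_contra hne
        exact hv (htfin.mem_toFinset.mpr hne)
      rw [hc, Real.exp_zero, mul_one]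
      exact hd1 v
  -- the bound at the infinite places
  set B : ℝ := Finset.univ.sup' Finset.univ_nonempty
    (fun w : NumberField.InfinitePlace K => w d * Real.exp (c (.inr w))) with hBdef
  have hT : {x : K | IsIntegral ℤ x ∧ ∀ φ : K →+* ℂ, ‖φ x‖ ≤ B}.Finite :=
    NumberField.Embeddings.finite_of_norm_le K ℂ B
  have hTpi : {g : Fin (n + 1) × Fin (n + 1) → K |
      ∀ p, g p ∈ {x : K | IsIntegral ℤ x ∧ ∀ φ : K →+* ℂ, ‖φ x‖ ≤ B}}.Finite := by
    refine (Set.Finite.pi (fun _ : Fin (n + 1) × Fin (n + 1) => hT)).subset ?_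
    intro g hg
    exact Set.mem_pi.mpr (fun p _ => hg p)
  refine Set.Finite.of_finite_image (f := zmap F c d f) (hTpi.subset ?_) ?_
  · -- the image is contained in the finite set
    rintro g ⟨Q, hQ, rfl⟩
    intro p
    have hQ' : ∃ (q : Fin (n + 1) → K) (hq : q ≠ 0), Projectivization.mk K q hq = Q ∧
        MvPolynomial.eval q F ≠ 0 ∧
        ∀ v : Place K,
          Real.log ((⨆ i, placeAbs v (q i)) ^ (f + 1) /
            placeAbs v (MvPolynomial.eval q F)) ≤ c v := hQ
    rw [zmap, dif_pos hQ']
    set q := hQ'.choose with hqdef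
    obtain ⟨hq, hmk, hFq, hineq⟩ := hQ'.choose_spec
    constructor
    · -- integrality
      apply isIntegral_of_valuation_le_one
      intro v
      rw [← finAbs_le_one_iff]
      have hb := key_bound (K := K) (.inl v) q (MvPolynomial.eval q F) hFq f (c (.inl v))
        (hineq (.inl v)) d p.1 p.2
      exact le_trans hb (hd2 v)
    · -- archimedean bounds
      intro φ
      set w := NumberField.InfinitePlace.mk φ with hwdef
      have hb := key_bound (K := K) (.inr w) q (MvPolynomial.eval q F) hFq f (c (.inr w))
        (hineq (.inr w)) d p.1 p.2
      have heq : ‖φ (d * q p.1 * q p.2 ^ f / MvPolynomial.eval q F)‖ =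
          placeAbs (K := K) (.inr w) (d * q p.1 * q p.2 ^ f / MvPolynomial.eval q F) := by
        simp [placeAbs, hwdef, NumberField.InfinitePlace.apply]
      rw [heq]
      refine le_trans hb ?_
      exact Finset.le_sup' (fun w : NumberField.InfinitePlace K =>
        w d * Real.exp (c (.inr w))) (Finset.mem_univ w)
  · -- injectivity on the set
    intro Q hQmem Q' hQmem' hEq
    have hQ : ∃ (q : Fin (n + 1) → K) (hq : q ≠ 0), Projectivization.mk K q hq = Q ∧
        MvPolynomial.eval q F ≠ 0 ∧
        ∀ v : Place K,
          Real.log ((⨆ i, placeAbs v (q i)) ^ (f + 1) /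
            placeAbs v (MvPolynomial.eval q F)) ≤ c v := hQmem
    have hQ' : ∃ (q : Fin (n + 1) → K) (hq : q ≠ 0), Projectivization.mk K q hq = Q' ∧
        MvPolynomial.eval q F ≠ 0 ∧
        ∀ v : Place K,
          Real.log ((⨆ i, placeAbs v (q i)) ^ (f + 1) /
            placeAbs v (MvPolynomial.eval q F)) ≤ c v := hQmem'
    rw [zmap, dif_pos hQ, zmap, dif_pos hQ'] at hEq
    set q := hQ.choose with hqdef
    obtain ⟨hq, hmk, hFq, _⟩ := hQ.choose_spec
    set q' := hQ'.choose with hq'def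
    obtain ⟨hq', hmk', hFq', _⟩ := hQ'.choose_spec
    obtain ⟨j0, hj0⟩ : ∃ j0, q j0 ≠ 0 := by
      by_contra hcon
      push_neg at hcon
      exact hq (funext fun i => hcon i)
    have h1 := congrFun hEq (j0, j0)
    have h2' : ∀ i, d * q i * q j0 ^ f / MvPolynomial.eval q F =
        d * q' i * q' j0 ^ f / MvPolynomial.eval q' F := fun i => congrFun hEq (i, j0)
    have hj0' : q' j0 ≠ 0 := by
      intro hz
      have : d * q j0 * q j0 ^ f / MvPolynomial.eval q F ≠ 0 :=
        div_ne_zero (mul_ne_zero (mul_ne_zero hdK hj0) (pow_ne_zero _ hj0)) hFq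
      apply this
      rw [h1, hz]
      simp
    -- derive proportionality
    have hcross : ∀ i, q' j0 * q i = q' i * q j0 := by
      intro i
      have e1 : (d * q j0 * q j0 ^ f) * MvPolynomial.eval q' F =
          (d * q' j0 * q' j0 ^ f) * MvPolynomial.eval q F :=
        (div_eq_div_iff hFq hFq').mp h1
      have e2 : (d * q i * q j0 ^ f) * MvPolynomial.eval q' F =
          (d * q' i * q' j0 ^ f) * MvPolynomial.eval q F :=
        (div_eq_div_iff hFq hFq').mp (h2' i)
      have h4 : d * q' j0 ^ f * MvPolynomial.eval q F * (q' j0 * q i - q' i * q j0) = 0 := by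
        linear_combination (q j0) * e2 - (q i) * e1
      have hne : d * q' j0 ^ f * MvPolynomial.eval q F ≠ 0 :=
        mul_ne_zero (mul_ne_zero hdK (pow_ne_zero _ hj0')) hFq
      have h5 := (mul_eq_zero.mp h4).resolve_left hne
      linear_combination h5
    rw [← hmk, ← hmk', Projectivization.mk_eq_mk_iff]
    refine ⟨Units.mk0 (q j0 / q' j0) (div_ne_zero hj0 hj0'), ?_⟩
    funext i
    show (q j0 / q' j0) * q' i = q i
    field_simp
    linear_combination (hcross i).symm
end

section
/- Let k be a number field, n ≥ 2 an integer, D a finite set of k-rational points of ℙⁿ, and L a line in ℙⁿ defined over k such that no point of D lies on L. For each place v of k let n_v be a non-negative real number, with n_v = 0 for all but finitely many places v. Suppose there exists P ∈ L(k) such that λ_{d,v}(P) ≤ n_v for every finite place v and every d ∈ D, and λ_{d,w}(P) < n_w for every infinite place w and every d ∈ D. Then there are infinitely many points Q ∈ L(k) satisfying λ_{d,v}(Q) ≤ n_v for every place v of k and every d ∈ D. (This is the genus-zero case of the theorem on everywhere-integral points of curves, for the curve C = L in V = ℙⁿ and D a finite set of points disjoint from C.) -/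
open NumberField IsDedekindDomain

/-- `‖q‖_v = max (|q₀|_v, …, |q_n|_v)`: the `v`-adic sup norm of a coordinate vector. -/
noncomputable def projNorm {K : Type} [Field K] [NumberField K] {n : ℕ} (v : Place K)
    (q : Fin (n + 1) → K) : ℝ :=
  ⨆ i, placeAbs v (q i)

/-- `δ_v(d, q) = max_{0 ≤ i < j ≤ n} |dᵢ qⱼ − dⱼ qᵢ|_v`, written as the maximum over all
pairs `(i, j)`, which agrees with the maximum over `i < j` since the quantity is symmetric
under swapping `i` and `j` and vanishes (hence does not contribute) for `i = j`. -/
noncomputable def projDelta {K : Type} [Field K] [NumberField K] {n : ℕ} (v : Place K)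
    (d q : Fin (n + 1) → K) : ℝ :=
  ⨆ p : Fin (n + 1) × Fin (n + 1), placeAbs v (d p.1 * q p.2 - d p.2 * q p.1)

/-- The standard Weil function `λ_{d,v}(Q) = log (‖d‖_v · ‖Q‖_v / δ_v(d, Q))` of the point
`d` at the place `v`, computed using the canonical representatives (mathematically it is
independent of the choice of homogeneous coordinates). -/
noncomputable def weil {K : Type} [Field K] [NumberField K] {n : ℕ} (v : Place K)
    (d Q : Projectivization K (Fin (n + 1) → K)) : ℝ :=
  Real.log (projNorm v d.rep * projNorm v Q.rep / projDelta v d.rep Q.rep)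

section helpers

variable {K : Type} [Field K] [NumberField K]

lemma absNorm_ne_zero' (v : FinPlace K) : (Ideal.absNorm v.asIdeal : NNReal) ≠ 0 := by
  refine Nat.cast_ne_zero (R := NNReal) |>.mpr ?_
  simpa [Ideal.absNorm_eq_zero_iff] using v.ne_bot

lemma one_lt_absNorm (v : FinPlace K) : 1 < (Ideal.absNorm v.asIdeal : NNReal) := by
  have h0 : Ideal.absNorm v.asIdeal ≠ 0 := by
    simpa [Ideal.absNorm_eq_zero_iff] using v.ne_bot
  have h1 : Ideal.absNorm v.asIdeal ≠ 1 := by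
    rw [Ne, Ideal.absNorm_eq_one_iff]
    exact v.isPrime.ne_top
  have : 1 < Ideal.absNorm v.asIdeal := by omega
  exact_mod_cast this

lemma finAbs_def (v : FinPlace K) (x : K) :
    finAbs v x = (WithZeroMulInt.toNNReal (absNorm_ne_zero' v) (v.valuation K x) : ℝ) := rfl

lemma finAbs_nonneg (v : FinPlace K) (x : K) : 0 ≤ finAbs v x := by
  rw [finAbs_def]; exact NNReal.coe_nonneg _

lemma finAbs_mul (v : FinPlace K) (x y : K) :
    finAbs v (x * y) = finAbs v x * finAbs v y := by
  simp only [finAbs_def, Valuation.map_mul, map_mul, NNReal.coe_mul]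

lemma finAbs_div (v : FinPlace K) (x y : K) :
    finAbs v (x / y) = finAbs v x / finAbs v y := by
  simp only [finAbs_def, map_div₀, NNReal.coe_div]

lemma finAbs_one (v : FinPlace K) : finAbs v 1 = 1 := by
  simp only [finAbs_def, Valuation.map_one, map_one, NNReal.coe_one]

lemma finAbs_zero (v : FinPlace K) : finAbs v 0 = 0 := by
  simp only [finAbs_def, Valuation.map_zero, map_zero, NNReal.coe_zero]

lemma finAbs_pow (v : FinPlace K) (x : K) (m : ℕ) :
    finAbs v (x ^ m) = finAbs v x ^ m := by
  simp only [finAbs_def, map_pow, NNReal.coe_pow]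

lemma finAbs_neg (v : FinPlace K) (x : K) : finAbs v (-x) = finAbs v x := by
  simp only [finAbs_def, Valuation.map_neg]

lemma finAbs_pos (v : FinPlace K) {x : K} (hx : x ≠ 0) : 0 < finAbs v x := by
  rw [finAbs_def]
  have h : v.valuation K x ≠ 0 := by
    simpa [Valuation.ne_zero_iff] using hx
  rw [WithZeroMulInt.toNNReal_neg_apply _ h]
  have : (0 : NNReal) < (Ideal.absNorm v.asIdeal : NNReal) :=
    lt_trans zero_lt_one (one_lt_absNorm v)
  positivity

lemma finAbs_le_iff (v : FinPlace K) {x y : K} :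
    finAbs v x ≤ finAbs v y ↔ v.valuation K x ≤ v.valuation K y := by
  rw [finAbs_def, finAbs_def, NNReal.coe_le_coe]
  exact (WithZeroMulInt.toNNReal_strictMono (one_lt_absNorm v)).le_iff_le

lemma finAbs_lt_iff (v : FinPlace K) {x y : K} :
    finAbs v x < finAbs v y ↔ v.valuation K x < v.valuation K y := by
  rw [finAbs_def, finAbs_def, NNReal.coe_lt_coe]
  exact (WithZeroMulInt.toNNReal_strictMono (one_lt_absNorm v)).lt_iff_lt

lemma finAbs_le_one_iff (v : FinPlace K) {x : K} :
    finAbs v x ≤ 1 ↔ v.valuation K x ≤ 1 := by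
  have := finAbs_le_iff v (x := x) (y := 1)
  rwa [finAbs_one, Valuation.map_one] at this

lemma finAbs_lt_one_iff (v : FinPlace K) {x : K} :
    finAbs v x < 1 ↔ v.valuation K x < 1 := by
  have := finAbs_lt_iff v (x := x) (y := 1)
  rwa [finAbs_one, Valuation.map_one] at this

lemma finAbs_add_le_max (v : FinPlace K) (x y : K) :
    finAbs v (x + y) ≤ max (finAbs v x) (finAbs v y) := by
  rcases le_total (v.valuation K x) (v.valuation K y) with h | h
  · refine le_trans ((finAbs_le_iff v).mpr ?_) (le_max_right _ _)
    exact le_trans (Valuation.map_add _ _ _) (by simpa [h])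
  · refine le_trans ((finAbs_le_iff v).mpr ?_) (le_max_left _ _)
    exact le_trans (Valuation.map_add _ _ _) (by simpa [h])

lemma finAbs_add_eq_of_lt (v : FinPlace K) {x y : K} (h : finAbs v y < finAbs v x) :
    finAbs v (x + y) = finAbs v x := by
  refine le_antisymm (le_trans (finAbs_add_le_max v x y) (by simp [le_of_lt h])) ?_
  by_contra hlt
  push_neg at hlt
  have hx : finAbs v x = finAbs v (x + y + (-y)) := by ring_nf
  have := le_trans (le_of_eq hx) (finAbs_add_le_max v (x + y) (-y))
  rw [finAbs_neg] at this
  rcases max_cases (finAbs v (x + y)) (finAbs v y) with ⟨he, _⟩ | ⟨he, _⟩ <;> rw [he] at this <;>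
    linarith

lemma finAbs_coe_le_one (v : FinPlace K) (r : 𝓞 K) :
    finAbs v (algebraMap (𝓞 K) K r) ≤ 1 := by
  rw [finAbs_le_one_iff]
  exact v.valuation_le_one (K := K) r

lemma finAbs_natCast_le_one (v : FinPlace K) (m : ℕ) : finAbs v (m : K) ≤ 1 := by
  have := finAbs_coe_le_one v (m : 𝓞 K)
  rwa [map_natCast] at this

lemma placeAbs_nonneg (v : Place K) (x : K) : 0 ≤ placeAbs v x := by
  cases v with
  | inl v => exact finAbs_nonneg v x
  | inr w => exact apply_nonneg w x

lemma placeAbs_mul (v : Place K) (x y : K) :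
    placeAbs v (x * y) = placeAbs v x * placeAbs v y := by
  cases v with
  | inl v => exact finAbs_mul v x y
  | inr w => exact map_mul w x y

lemma placeAbs_pow (v : Place K) (x : K) (m : ℕ) :
    placeAbs v (x ^ m) = placeAbs v x ^ m := by
  cases v with
  | inl v => exact finAbs_pow v x m
  | inr w => exact map_pow w x m

lemma placeAbs_neg (v : Place K) (x : K) : placeAbs v (-x) = placeAbs v x := by
  cases v with
  | inl v => exact finAbs_neg v x
  | inr w => exact w.1.map_neg x

lemma placeAbs_pos (v : Place K) {x : K} (hx : x ≠ 0) : 0 < placeAbs v x := by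
  cases v with
  | inl v => exact finAbs_pos v hx
  | inr w => exact lt_of_le_of_ne (apply_nonneg w x) (Ne.symm ((map_ne_zero w).mpr hx))

lemma placeAbs_zero (v : Place K) : placeAbs v (0 : K) = 0 := by
  cases v with
  | inl v => exact finAbs_zero v
  | inr w => exact map_zero w

lemma placeAbs_add_le (v : Place K) (x y : K) :
    placeAbs v (x + y) ≤ placeAbs v x + placeAbs v y := by
  cases v with
  | inl v =>
    show finAbs v (x + y) ≤ finAbs v x + finAbs v y
    refine le_trans (finAbs_add_le_max v x y) ?_
    rcases max_cases (finAbs v x) (finAbs v y) with ⟨he, _⟩ | ⟨he, _⟩ <;> rw [he]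
    · have := finAbs_nonneg v y; linarith
    · have := finAbs_nonneg v x; linarith
  | inr w => exact w.1.add_le x y

/-- sup of `placeAbs` over coordinates of a finite family. -/
noncomputable def supAbs (v : Place K) {ι : Type} [Fintype ι] [Nonempty ι] (F : ι → K) : ℝ :=
  ⨆ i, placeAbs v (F i)

variable {ι : Type} [Fintype ι] [Nonempty ι]

lemma le_supAbs (v : Place K) (F : ι → K) (i : ι) : placeAbs v (F i) ≤ supAbs v F := by
  unfold supAbs
  exact le_ciSup (Set.Finite.bddAbove (Set.finite_range (fun i => placeAbs v (F i)))) i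

lemma supAbs_le (v : Place K) {F : ι → K} {C : ℝ} (h : ∀ i, placeAbs v (F i) ≤ C) :
    supAbs v F ≤ C := by unfold supAbs; exact ciSup_le h

lemma supAbs_nonneg (v : Place K) (F : ι → K) : 0 ≤ supAbs v F :=
  le_trans (placeAbs_nonneg v (F (Classical.arbitrary ι))) (le_supAbs v F _)

lemma exists_supAbs_eq (v : Place K) (F : ι → K) : ∃ i, supAbs v F = placeAbs v (F i) := by
  obtain ⟨i, hi⟩ := Finite.exists_max (fun i => placeAbs v (F i))
  exact ⟨i, le_antisymm (supAbs_le v hi) (le_supAbs v F i)⟩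

lemma supAbs_pos (v : Place K) {F : ι → K} (h : F ≠ 0) : 0 < supAbs v F := by
  obtain ⟨i, hi⟩ := Function.ne_iff.mp h
  exact lt_of_lt_of_le (placeAbs_pos v hi) (le_supAbs v F i)

lemma supAbs_smul (v : Place K) (s : K) (F : ι → K) :
    supAbs v (s • F) = placeAbs v s * supAbs v F := by
  refine le_antisymm (supAbs_le v fun i => ?_) ?_
  · rw [Pi.smul_apply, smul_eq_mul, placeAbs_mul]
    exact mul_le_mul_of_nonneg_left (le_supAbs v F i) (placeAbs_nonneg v s)
  · obtain ⟨i, hi⟩ := exists_supAbs_eq v F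
    rw [hi, ← placeAbs_mul]
    exact le_supAbs v (s • F) i

lemma supAbs_add_le (v : Place K) (F G : ι → K) :
    supAbs v (F + G) ≤ supAbs v F + supAbs v G := by
  refine supAbs_le v fun i => ?_
  refine le_trans (placeAbs_add_le v (F i) (G i)) ?_
  exact add_le_add (le_supAbs v F i) (le_supAbs v G i)

lemma supAbs_neg (v : Place K) (F : ι → K) : supAbs v (-F) = supAbs v F := by
  unfold supAbs
  refine iSup_congr fun i => ?_
  rw [Pi.neg_apply, placeAbs_neg]

lemma abs_supAbs_sub (v : Place K) (F G : ι → K) :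
    |supAbs v F - supAbs v G| ≤ supAbs v (F - G) := by
  rw [abs_sub_le_iff]
  constructor
  · have := supAbs_add_le v G (F - G)
    simp only [add_sub_cancel] at this
    linarith
  · have := supAbs_add_le v F (G - F)
    have hneg : supAbs v (G - F) = supAbs v (F - G) := by
      rw [← supAbs_neg v (G - F)]; congr 1; abel
    simp only [add_sub_cancel] at this
    linarith

lemma supAbs_add_eq_of_lt (v : FinPlace K) {F G : ι → K}
    (h : supAbs (Sum.inl v) G < supAbs (Sum.inl v) F) :
    supAbs (Sum.inl v) (F + G) = supAbs (Sum.inl v) F := by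
  refine le_antisymm (supAbs_le _ fun i => ?_) ?_
  · refine le_trans (finAbs_add_le_max v (F i) (G i))
      (max_le (le_supAbs (Sum.inl v) F i) ?_)
    exact le_trans (le_supAbs (Sum.inl v) G i) (le_of_lt h)
  · obtain ⟨i, hi⟩ := exists_supAbs_eq (Sum.inl v) F
    have hGi : finAbs v (G i) < finAbs v (F i) := by
      have := le_supAbs (Sum.inl v) G i
      calc placeAbs (Sum.inl v) (G i) ≤ supAbs (Sum.inl v) G := this
      _ < supAbs (Sum.inl v) F := h
      _ = placeAbs (Sum.inl v) (F i) := hi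
    calc supAbs (Sum.inl v) F = finAbs v (F i) := hi
    _ = finAbs v (F i + G i) := (finAbs_add_eq_of_lt v hGi).symm
    _ ≤ supAbs (Sum.inl v) (F + G) := le_supAbs (Sum.inl v) (F + G) i

lemma finAbs_sum_le (v : FinPlace K) {α : Type} (s : Finset α) (f : α → K) {C : ℝ}
    (hC : 0 ≤ C) (h : ∀ i ∈ s, finAbs v (f i) ≤ C) :
    finAbs v (∑ i ∈ s, f i) ≤ C := by
  classical
  induction s using Finset.induction_on with
  | empty => simpa [finAbs_zero] using hC
  | @insert a s' hx ih =>
    rw [Finset.sum_insert hx]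
    refine le_trans (finAbs_add_le_max v _ _) (max_le (h a (Finset.mem_insert_self a s')) ?_)
    exact ih fun i hi => h i (Finset.mem_insert_of_mem hi)

end helpers

section helpers2

variable {K : Type} [Field K] [NumberField K] {n : ℕ}

/-- The vector of 2×2 minors of the pair `(d, q)`. -/
def mnr (d q : Fin (n + 1) → K) : Fin (n + 1) × Fin (n + 1) → K :=
  fun p => d p.1 * q p.2 - d p.2 * q p.1

lemma projNorm_eq_supAbs (v : Place K) (q : Fin (n + 1) → K) :
    projNorm v q = supAbs v q := rfl

lemma projDelta_eq_supAbs (v : Place K) (d q : Fin (n + 1) → K) :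
    projDelta v d q = supAbs v (mnr d q) := rfl

lemma mnr_add_smul (d q u : Fin (n + 1) → K) (s : K) :
    mnr d (q + s • u) = mnr d q + s • mnr d u := by
  funext p
  simp only [mnr, Pi.add_apply, Pi.smul_apply, smul_eq_mul]
  ring

lemma mnr_smul_right (d q : Fin (n + 1) → K) (a : K) :
    mnr d (a • q) = a • mnr d q := by
  funext p
  simp only [mnr, Pi.smul_apply, smul_eq_mul]
  ring

lemma exists_smul_of_mnr_eq_zero {d q : Fin (n + 1) → K} (hq : q ≠ 0)
    (h : mnr d q = 0) : ∃ t : K, d = t • q := by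
  obtain ⟨j, hj⟩ := Function.ne_iff.mp hq
  have hj' : q j ≠ 0 := by simpa using hj
  refine ⟨d j / q j, ?_⟩
  funext i
  have := congrFun h (i, j)
  simp only [mnr, Pi.zero_apply] at this
  have hij : d i * q j = d j * q i := by linear_combination this
  rw [Pi.smul_apply, smul_eq_mul, div_mul_eq_mul_div, eq_div_iff hj']
  linear_combination hij

/-- The minor vector of `(d, q)` is nonzero when `q` is a nonzero element of a submodule
`W` not containing `d`. -/
lemma mnr_ne_zero {W : Submodule K (Fin (n + 1) → K)} {d q : Fin (n + 1) → K}
    (hq : q ≠ 0) (hqW : q ∈ W) (hd : d ∉ W) : mnr d q ≠ 0 := by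
  intro h
  obtain ⟨t, ht⟩ := exists_smul_of_mnr_eq_zero hq h
  exact hd (ht ▸ W.smul_mem t hqW)

/-- Invariance of the Weil function expression under scaling of the second vector. -/
lemma weil_log_smul (v : Place K) (d q : Fin (n + 1) → K) {a : K} (ha : a ≠ 0) :
    Real.log (projNorm v d * projNorm v (a • q) / projDelta v d (a • q)) =
    Real.log (projNorm v d * projNorm v q / projDelta v d q) := by
  rw [projNorm_eq_supAbs, projNorm_eq_supAbs, projDelta_eq_supAbs, projDelta_eq_supAbs,
    mnr_smul_right, supAbs_smul, supAbs_smul]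
  congr 1
  rw [show supAbs v d * (placeAbs v a * supAbs v q)
      = placeAbs v a * (supAbs v d * supAbs v q) by ring]
  exact mul_div_mul_left _ _ (ne_of_gt (placeAbs_pos v ha))

/-- Key bound: if `f` kills `q` and `f d = 1`, with `v`-integral coefficients of `f, g`,
then `|g q|_v` is at most `δ_v(d, q)`. -/
lemma dual_pair_bound (v : FinPlace K) (d q : Fin (n + 1) → K)
    (f g : (Fin (n + 1) → K) →ₗ[K] K) (hfq : f q = 0) (hfd : f d = 1)
    (hf : ∀ r, finAbs v (f fun j => if r = j then 1 else 0) ≤ 1)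
    (hg : ∀ r, finAbs v (g fun j => if r = j then 1 else 0) ≤ 1) :
    finAbs v (g q) ≤ projDelta (Sum.inl v) d q := by
  classical
  have key : g q = ∑ p : Fin (n + 1) × Fin (n + 1),
      g (fun j => if p.1 = j then 1 else 0) * f (fun j => if p.2 = j then 1 else 0) *
        (q p.1 * d p.2 - q p.2 * d p.1) := by
    have e1 := LinearMap.pi_apply_eq_sum_univ g q
    have e2 := LinearMap.pi_apply_eq_sum_univ f d
    have e3 := LinearMap.pi_apply_eq_sum_univ g d
    have e4 := LinearMap.pi_apply_eq_sum_univ f q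
    calc g q = g q * f d - g d * f q := by rw [hfq, hfd]; ring
    _ = _ := by
      rw [e1, e2, e3, e4, Finset.sum_mul_sum, Finset.sum_mul_sum,
        Fintype.sum_prod_type, ← Finset.sum_sub_distrib]
      refine Finset.sum_congr rfl fun r _ => ?_
      rw [← Finset.sum_sub_distrib]
      refine Finset.sum_congr rfl fun s _ => ?_
      simp only [smul_eq_mul]
      ring
  rw [key]
  refine finAbs_sum_le v _ _ (supAbs_nonneg _ _) fun p _ => ?_
  rw [finAbs_mul, finAbs_mul]
  have h1 : q p.1 * d p.2 - q p.2 * d p.1 = mnr d q (p.2, p.1) := by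
    simp only [mnr]; ring
  have h2 : finAbs v (q p.1 * d p.2 - q p.2 * d p.1) ≤ projDelta (Sum.inl v) d q := by
    rw [h1, projDelta_eq_supAbs]
    exact le_supAbs (Sum.inl v) (mnr d q) (p.2, p.1)
  calc finAbs v (g fun j => if p.1 = j then 1 else 0) *
        finAbs v (f fun j => if p.2 = j then 1 else 0) *
        finAbs v (q p.1 * d p.2 - q p.2 * d p.1)
      ≤ 1 * 1 * finAbs v (q p.1 * d p.2 - q p.2 * d p.1) := by
        exact mul_le_mul (mul_le_mul (hg p.1) (hf p.2) (finAbs_nonneg _ _) zero_le_one)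
          le_rfl (finAbs_nonneg _ _) (by norm_num)
    _ = finAbs v (q p.1 * d p.2 - q p.2 * d p.1) := by ring
    _ ≤ projDelta (Sum.inl v) d q := h2


lemma good_place_bound (v : FinPlace K) (d q A B : Fin (n + 1) → K) (x y : K)
    (hq : q = x • A + y • B)
    (f g h : (Fin (n + 1) → K) →ₗ[K] K)
    (hfq : f q = 0) (hfd : f d = 1) (hgq : g q = x) (hhq : h q = y)
    (hA : ∀ r, finAbs v (A r) ≤ 1) (hB : ∀ r, finAbs v (B r) ≤ 1)
    (hd : ∀ r, finAbs v (d r) ≤ 1)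
    (hf : ∀ r, finAbs v (f fun j => if r = j then 1 else 0) ≤ 1)
    (hg : ∀ r, finAbs v (g fun j => if r = j then 1 else 0) ≤ 1)
    (hh : ∀ r, finAbs v (h fun j => if r = j then 1 else 0) ≤ 1) :
    projNorm (Sum.inl v) d * projNorm (Sum.inl v) q ≤ projDelta (Sum.inl v) d q := by
  have hx : finAbs v x ≤ projDelta (Sum.inl v) d q := by
    have := dual_pair_bound v d q f g hfq hfd hf hg
    rwa [hgq] at this
  have hy : finAbs v y ≤ projDelta (Sum.inl v) d q := by
    have := dual_pair_bound v d q f h hfq hfd hf hh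
    rwa [hhq] at this
  have hNd : projNorm (Sum.inl v) d ≤ 1 := by
    rw [projNorm_eq_supAbs]
    exact supAbs_le _ fun r => hd r
  have hNq : projNorm (Sum.inl v) q ≤ max (finAbs v x) (finAbs v y) := by
    rw [projNorm_eq_supAbs]
    refine supAbs_le _ fun r => ?_
    have hqr : q r = x * A r + y * B r := by
      rw [hq]; simp [Pi.add_apply, Pi.smul_apply, smul_eq_mul]
    show finAbs v (q r) ≤ _
    rw [hqr]
    refine le_trans (finAbs_add_le_max v _ _) (max_le_max ?_ ?_)
    · rw [finAbs_mul]
      exact mul_le_of_le_one_right (finAbs_nonneg v x) (hA r)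
    · rw [finAbs_mul]
      exact mul_le_of_le_one_right (finAbs_nonneg v y) (hB r)
  calc projNorm (Sum.inl v) d * projNorm (Sum.inl v) q
      ≤ 1 * projNorm (Sum.inl v) q := by
        refine mul_le_mul_of_nonneg_right hNd ?_
        rw [projNorm_eq_supAbs]; exact supAbs_nonneg _ _
    _ = projNorm (Sum.inl v) q := one_mul _
    _ ≤ max (finAbs v x) (finAbs v y) := hNq
    _ ≤ projDelta (Sum.inl v) d q := max_le hx hy

lemma finite_finAbs_gt_one (z : K) : {v : FinPlace K | ¬ finAbs v z ≤ 1}.Finite := by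
  obtain ⟨a, b, hb, rfl⟩ := IsFractionRing.div_surjective (A := 𝓞 K) z
  have hb0 : b ≠ 0 := nonZeroDivisors.ne_zero hb
  have hspan : Ideal.span {b} ≠ (⊥ : Ideal (𝓞 K)) := by
    rwa [Ne, Ideal.span_singleton_eq_bot]
  refine Set.Finite.subset (Ideal.finite_factors hspan) ?_
  intro v hv
  simp only [Set.mem_setOf_eq, finAbs_le_one_iff, not_le] at hv
  have hbK : (algebraMap (𝓞 K) K) b ≠ 0 := by
    rw [map_ne_zero_iff _ (IsFractionRing.injective (𝓞 K) K)]
    exact hb0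
  have hvb : v.valuation K ((algebraMap (𝓞 K) K) b) ≠ 0 := by
    rwa [Valuation.ne_zero_iff]
  rw [map_div₀] at hv
  have hlt : v.valuation K ((algebraMap (𝓞 K) K) b)
      < v.valuation K ((algebraMap (𝓞 K) K) a) := by
    have := (lt_div_iff₀ (zero_lt_iff.mpr hvb)).mp hv
    rwa [one_mul] at this
  have : v.valuation K ((algebraMap (𝓞 K) K) b) < 1 :=
    lt_of_lt_of_le hlt (v.valuation_le_one (K := K) a)
  rw [v.valuation_lt_one_iff_dvd] at this
  exact this

lemma exists_vanishing_dual {V : Type} [AddCommGroup V] [Module K V]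
    (W : Submodule K V) (d : V) (hd : d ∉ W) :
    ∃ f : V →ₗ[K] K, (∀ q ∈ W, f q = 0) ∧ f d = 1 := by
  have hne : W.mkQ d ≠ 0 := by
    rw [Submodule.mkQ_apply, Ne, Submodule.Quotient.mk_eq_zero]; exact hd
  have hex : ¬ ∀ φ : Module.Dual K (V ⧸ W), φ (W.mkQ d) = 0 := by
    rw [Module.forall_dual_apply_eq_zero_iff]; exact hne
  push_neg at hex
  obtain ⟨φ, hφ⟩ := hex
  refine ⟨(φ (W.mkQ d))⁻¹ • (φ.comp W.mkQ), fun q hq => ?_, ?_⟩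
  · have hq0 : W.mkQ q = 0 := by
      rwa [Submodule.mkQ_apply, Submodule.Quotient.mk_eq_zero]
    simp [LinearMap.smul_apply, LinearMap.comp_apply, hq0]
  · simp only [LinearMap.smul_apply, LinearMap.comp_apply, smul_eq_mul]
    exact inv_mul_cancel₀ hφ

lemma tendsto_supAbs_add_smul {ι : Type} [Fintype ι] [Nonempty ι] (v : Place K)
    (F G : ι → K) (σ : ℕ → K)
    (h : Filter.Tendsto (fun m => placeAbs v (σ m)) Filter.atTop (nhds 0)) :
    Filter.Tendsto (fun m => supAbs v (F + σ m • G)) Filter.atTop (nhds (supAbs v F)) := by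
  have key : ∀ m, ‖supAbs v (F + σ m • G) - supAbs v F‖ ≤ placeAbs v (σ m) * supAbs v G := by
    intro m
    have h1 := abs_supAbs_sub v (F + σ m • G) F
    rw [add_sub_cancel_left, supAbs_smul] at h1
    simpa [Real.norm_eq_abs] using h1
  have h2 : Filter.Tendsto (fun m => placeAbs v (σ m) * supAbs v G) Filter.atTop (nhds 0) := by
    simpa using h.mul_const (supAbs v G)
  have h3 := squeeze_zero_norm key h2
  have h4 := h3.add_const (supAbs v F)
  simpa using h4

lemma supAbs_add_smul_eq {ι : Type} [Fintype ι] [Nonempty ι] (v : FinPlace K)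
    (F G : ι → K) (s : K) (hF : 0 < supAbs (Sum.inl v) F)
    (hs : finAbs v s < supAbs (Sum.inl v) F / (supAbs (Sum.inl v) G + 1)) :
    supAbs (Sum.inl v) (F + s • G) = supAbs (Sum.inl v) F := by
  apply supAbs_add_eq_of_lt
  rw [supAbs_smul]
  have hG0 : (0:ℝ) ≤ supAbs (Sum.inl v) G := supAbs_nonneg _ _
  calc placeAbs (Sum.inl v) s * supAbs (Sum.inl v) G
      ≤ placeAbs (Sum.inl v) s * (supAbs (Sum.inl v) G + 1) := by
        refine mul_le_mul_of_nonneg_left (by linarith) (placeAbs_nonneg _ _)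
    _ < (supAbs (Sum.inl v) F / (supAbs (Sum.inl v) G + 1)) *
        (supAbs (Sum.inl v) G + 1) := by
        refine mul_lt_mul_of_pos_right hs (by linarith)
    _ = supAbs (Sum.inl v) F := div_mul_cancel₀ _ (by linarith)

end helpers2

/-- Let `k` be a number field, `n ≥ 2`, `D` a finite set of `k`-rational
points of `ℙⁿ`, and `L` a line in `ℙⁿ` over `k` (the image of the map `ℙ¹ → ℙⁿ` induced by
an injective linear map `M : k² → k^{n+1}`) such that no point of `D` lies on `L`. For each
place `v` let `n_v ≥ 0`, with `n_v = 0` for all but finitely many places. Suppose there is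
`P ∈ L(k)` with `λ_{d,v}(P) ≤ n_v` for every finite place `v` and every `d ∈ D`, and
`λ_{d,w}(P) < n_w` for every infinite place `w` and every `d ∈ D`. Then there are
infinitely many `Q ∈ L(k)` with `λ_{d,v}(Q) ≤ n_v` for every place `v` and every
`d ∈ D`. -/
theorem infinitely_many_everywhere_integral_points_on_line
    (K : Type) [Field K] [NumberField K] (n : ℕ) (hn : 2 ≤ n)
    (D : Finset (Projectivization K (Fin (n + 1) → K)))
    (M : (Fin 2 → K) →ₗ[K] (Fin (n + 1) → K)) (hM : Function.Injective M)
    (hDL : ∀ d ∈ D, d.rep ∉ LinearMap.range M)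
    (c : Place K → ℝ) (hc0 : ∀ v, 0 ≤ c v) (hcfin : {v : Place K | c v ≠ 0}.Finite)
    (P : Projectivization K (Fin (n + 1) → K)) (hPL : P.rep ∈ LinearMap.range M)
    (hPfin : ∀ v : FinPlace K, ∀ d ∈ D, weil (Sum.inl v) d P ≤ c (Sum.inl v))
    (hPinf : ∀ w : NumberField.InfinitePlace K, ∀ d ∈ D,
      weil (Sum.inr w) d P < c (Sum.inr w)) :
    {Q : Projectivization K (Fin (n + 1) → K) | Q.rep ∈ LinearMap.range M ∧
      ∀ v : Place K, ∀ d ∈ D, weil v d Q ≤ c v}.Infinite := by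
  classical
  set W := LinearMap.range M with hWdef
  obtain ⟨Ninv, hNinv⟩ := M.exists_leftInverse_of_injective (LinearMap.ker_eq_bot.mpr hM)
  have hNM : ∀ z, Ninv (M z) = z := fun z => by
    rw [← LinearMap.comp_apply, hNinv, LinearMap.id_apply]
  set A : Fin (n + 1) → K := M (fun j => if (0 : Fin 2) = j then 1 else 0) with hAdef
  set B : Fin (n + 1) → K := M (fun j => if (1 : Fin 2) = j then 1 else 0) with hBdef
  have hMz : ∀ z : Fin 2 → K, M z = z 0 • A + z 1 • B := by
    intro z
    rw [hAdef, hBdef, ← map_smul, ← map_smul, ← map_add]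
    congr 1
    funext i
    fin_cases i <;> simp
  set gL : (Fin (n + 1) → K) →ₗ[K] K := (LinearMap.proj 0).comp Ninv with hgLdef
  set hL : (Fin (n + 1) → K) →ₗ[K] K := (LinearMap.proj 1).comp Ninv with hhLdef
  have hgM : ∀ z, gL (M z) = z 0 := fun z => by
    rw [hgLdef, LinearMap.comp_apply, hNM z, LinearMap.proj_apply]
  have hhM : ∀ z, hL (M z) = z 1 := fun z => by
    rw [hhLdef, LinearMap.comp_apply, hNM z, LinearMap.proj_apply]
  have hdual : ∀ d : {d // d ∈ D}, ∃ f : (Fin (n + 1) → K) →ₗ[K] K,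
      (∀ q ∈ W, f q = 0) ∧
      f (d : Projectivization K (Fin (n + 1) → K)).rep = 1 :=
    fun d => exists_vanishing_dual W _ (hDL d.1 d.2)
  choose fD hfD0 hfD1 using hdual
  -- the predicate saying that a finite place is "good"
  set Good : FinPlace K → Prop := fun v =>
    (∀ r, finAbs v (A r) ≤ 1) ∧ (∀ r, finAbs v (B r) ≤ 1) ∧
    (∀ r, finAbs v (gL (fun j => if r = j then 1 else 0)) ≤ 1) ∧
    (∀ r, finAbs v (hL (fun j => if r = j then 1 else 0)) ≤ 1) ∧
    (∀ d : {d // d ∈ D},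
      (∀ r, finAbs v ((d : Projectivization K (Fin (n + 1) → K)).rep r) ≤ 1) ∧
      (∀ r, finAbs v (fD d (fun j => if r = j then 1 else 0)) ≤ 1)) with hGooddef
  have hGoodFin : {v : FinPlace K | ¬ Good v}.Finite := by
    set Els : Set K := Set.range A ∪ Set.range B ∪
      Set.range (fun r => gL (fun j => if r = j then 1 else 0)) ∪
      Set.range (fun r => hL (fun j => if r = j then 1 else 0)) ∪
      (⋃ d : {d // d ∈ D},
        (Set.range (fun r => (d : Projectivization K (Fin (n + 1) → K)).rep r) ∪
         Set.range (fun r => fD d (fun j => if r = j then 1 else 0)))) with hElsdef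
    have hElsFin : Els.Finite := by
      refine ((((Set.finite_range A).union (Set.finite_range B)).union
        (Set.finite_range _)).union (Set.finite_range _)).union ?_
      exact Set.finite_iUnion fun d => (Set.finite_range _).union (Set.finite_range _)
    have hsub : {v : FinPlace K | ¬ Good v} ⊆ ⋃ z ∈ Els, {v | ¬ finAbs v z ≤ 1} := by
      intro v hv
      simp only [Set.mem_setOf_eq] at hv
      by_contra hmem
      apply hv
      have hall : ∀ z ∈ Els, finAbs v z ≤ 1 := by
        intro z hz
        by_contra hzz
        exact hmem (Set.mem_biUnion hz hzz)
      rw [hGooddef]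
      refine ⟨fun r => hall _ ?_, fun r => hall _ ?_, fun r => hall _ ?_, fun r => hall _ ?_,
        fun d => ⟨fun r => hall _ ?_, fun r => hall _ ?_⟩⟩ <;>
        simp only [hElsdef, Set.mem_union, Set.mem_range, Set.mem_iUnion]
      · exact Or.inl (Or.inl (Or.inl (Or.inl ⟨r, rfl⟩)))
      · exact Or.inl (Or.inl (Or.inl (Or.inr ⟨r, rfl⟩)))
      · exact Or.inl (Or.inl (Or.inr ⟨r, rfl⟩))
      · exact Or.inl (Or.inr ⟨r, rfl⟩)
      · exact Or.inr ⟨d, Or.inl ⟨r, rfl⟩⟩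
      · exact Or.inr ⟨d, Or.inr ⟨r, rfl⟩⟩
    exact Set.Finite.subset (Set.Finite.biUnion hElsFin fun z _ => finite_finAbs_gt_one z) hsub
  -- at good places, every point of the line satisfies the bound
  have hgood : ∀ v : FinPlace K, Good v →
      ∀ Q : Projectivization K (Fin (n + 1) → K), Q.rep ∈ W →
      ∀ d ∈ D, weil (Sum.inl v) d Q ≤ c (Sum.inl v) := by
    intro v hgv Q hQ d hd
    obtain ⟨z, hz⟩ := hQ
    rw [hGooddef] at hgv
    obtain ⟨hA1, hB1, hg1, hh1, hD1⟩ := hgv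
    have key := good_place_bound v d.rep Q.rep A B (z 0) (z 1)
      (by rw [← hz, hMz z]) (fD ⟨d, hd⟩) gL hL
      (hfD0 ⟨d, hd⟩ Q.rep ⟨z, hz⟩) (hfD1 ⟨d, hd⟩)
      (by rw [← hz, hgM]) (by rw [← hz, hhM])
      hA1 hB1 (hD1 ⟨d, hd⟩).1 (hD1 ⟨d, hd⟩).2 hg1 hh1
    refine le_trans ?_ (hc0 (Sum.inl v))
    unfold weil
    refine Real.log_nonpos ?_ ?_
    · refine div_nonneg (mul_nonneg ?_ ?_) ?_ <;>
        first
        | (rw [projNorm_eq_supAbs]; exact supAbs_nonneg _ _)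
        | (rw [projDelta_eq_supAbs]; exact supAbs_nonneg _ _)
    · refine div_le_one_of_le₀ key ?_
      rw [projDelta_eq_supAbs]; exact supAbs_nonneg _ _
  -- parametrize the line through P
  obtain ⟨p, hp⟩ := hPL
  have hpne : p ≠ 0 := fun h => P.rep_nonzero (by rw [← hp, h, map_zero])
  obtain ⟨u, hdet⟩ : ∃ u : Fin 2 → K, p 0 * u 1 - p 1 * u 0 ≠ 0 := by
    by_cases h0 : p 0 ≠ 0
    · exact ⟨fun j => if j = 1 then 1 else 0, by simpa using h0⟩
    · push_neg at h0
      have h1 : p 1 ≠ 0 := by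
        intro h1
        apply hpne
        funext i
        fin_cases i <;> simp [h0, h1]
      exact ⟨fun j => if j = 0 then 1 else 0, by simpa using h1⟩
  set U : Fin (n + 1) → K := M u with hUdef
  have hsu : ∀ s : K, p + s • u ≠ 0 := by
    intro s h
    apply hdet
    have h0 := congrFun h 0
    have h1 := congrFun h 1
    simp only [Pi.add_apply, Pi.smul_apply, smul_eq_mul, Pi.zero_apply] at h0 h1
    linear_combination u 1 * h0 - u 0 * h1
  have hMps : ∀ s : K, P.rep + s • U = M (p + s • u) := by
    intro s; rw [map_add, map_smul, hp]
  have hqne : ∀ s : K, P.rep + s • U ≠ 0 := by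
    intro s h
    apply hsu s
    apply hM
    rw [map_zero, ← hMps s]
    exact h
  set Qs : K → Projectivization K (Fin (n + 1) → K) :=
    fun s => Projectivization.mk K (P.rep + s • U) (hqne s) with hQsdef
  have hQrep : ∀ s : K, ∃ a : Kˣ, (a : K) • (P.rep + s • U) = (Qs s).rep := by
    intro s
    refine (Projectivization.mk_eq_mk_iff K _ _ (Projectivization.rep_nonzero _) (hqne s)).mp ?_
    rw [Projectivization.mk_rep]
  have hQW : ∀ s : K, (Qs s).rep ∈ W := by
    intro s
    obtain ⟨a, ha⟩ := hQrep s
    rw [← ha, hMps s]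
    exact W.smul_mem _ ⟨p + s • u, rfl⟩
  have hQinj : Function.Injective Qs := by
    intro s t h
    have h2 : Projectivization.mk K (P.rep + s • U) (hqne s) =
        Projectivization.mk K (P.rep + t • U) (hqne t) := h
    rw [Projectivization.mk_eq_mk_iff] at h2
    obtain ⟨a, ha⟩ := h2
    have ha' : (a : K) • (p + t • u) = p + s • u := by
      apply hM
      rw [map_smul, ← hMps t, ← hMps s]
      exact ha
    have h0 := congrFun ha' 0
    have h1 := congrFun ha' 1
    simp only [Pi.add_apply, Pi.smul_apply, smul_eq_mul, Pi.zero_apply] at h0 h1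
    have hst : (t - s) * (p 0 * u 1 - p 1 * u 0) = 0 := by
      linear_combination (p 0 + t * u 0) * h1 - (p 1 + t * u 1) * h0
    rcases mul_eq_zero.mp hst with h' | h'
    · exact (sub_eq_zero.mp h').symm
    · exact absurd h' hdet
  have hweilQ : ∀ (v : Place K) (d : Projectivization K (Fin (n + 1) → K)) (s : K),
      weil v d (Qs s) = Real.log (projNorm v d.rep * projNorm v (P.rep + s • U) /
        projDelta v d.rep (P.rep + s • U)) := by
    intro v d s
    obtain ⟨a, ha⟩ := hQrep s
    unfold weil
    rw [← ha]
    exact weil_log_smul v d.rep (P.rep + s • U) a.ne_zero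
  -- local constancy at any finite place
  have hbadfin : ∀ v : FinPlace K, ∀ d ∈ D, ∃ ε > 0, ∀ s : K,
      finAbs v s < ε → weil (Sum.inl v) d (Qs s) = weil (Sum.inl v) d P := by
    intro v d hd
    have hdd : d.rep ∉ W := hDL d hd
    have hNP : 0 < supAbs (Sum.inl v) P.rep := supAbs_pos _ P.rep_nonzero
    have hmnrP : mnr d.rep P.rep ≠ 0 :=
      mnr_ne_zero P.rep_nonzero (LinearMap.mem_range.mpr ⟨p, hp⟩) hdd
    have hDP : 0 < supAbs (Sum.inl v) (mnr d.rep P.rep) := supAbs_pos _ hmnrP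
    have hCU0 : (0:ℝ) ≤ supAbs (Sum.inl v) U := supAbs_nonneg _ _
    have hCD0 : (0:ℝ) ≤ supAbs (Sum.inl v) (mnr d.rep U) := supAbs_nonneg _ _
    refine ⟨min (supAbs (Sum.inl v) P.rep / (supAbs (Sum.inl v) U + 1))
      (supAbs (Sum.inl v) (mnr d.rep P.rep) / (supAbs (Sum.inl v) (mnr d.rep U) + 1)),
      lt_min (div_pos hNP (by linarith)) (div_pos hDP (by linarith)), ?_⟩
    intro s hs
    have h1 : supAbs (Sum.inl v) (P.rep + s • U) = supAbs (Sum.inl v) P.rep :=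
      supAbs_add_smul_eq v P.rep U s hNP (lt_of_lt_of_le hs (min_le_left _ _))
    have h2 : supAbs (Sum.inl v) (mnr d.rep (P.rep + s • U))
        = supAbs (Sum.inl v) (mnr d.rep P.rep) := by
      rw [mnr_add_smul]
      exact supAbs_add_smul_eq v (mnr d.rep P.rep) (mnr d.rep U) s hDP
        (lt_of_lt_of_le hs (min_le_right _ _))
    rw [hweilQ]
    unfold weil
    simp only [projNorm_eq_supAbs, projDelta_eq_supAbs]
    rw [h1, h2]
  -- construction of the shrinking sequence of parameters
  obtain ⟨s1, hs1ne, hs1fin, hs1inf⟩ : ∃ s1 : K, s1 ≠ 0 ∧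
      (∀ v : FinPlace K, ¬ Good v → finAbs v s1 < 1) ∧
      (∀ w : NumberField.InfinitePlace K, w s1 < 1) := by
    set Bf := hGoodFin.toFinset with hBf
    set I : Ideal (𝓞 K) := ∏ v ∈ Bf, v.asIdeal with hI
    have hI0 : I ≠ 0 := by
      rw [hI]
      exact Finset.prod_ne_zero_iff.mpr fun v _ => v.ne_bot
    set n₀ : ℕ := Ideal.absNorm I with hn₀
    have hn₀0 : n₀ ≠ 0 := by
      rw [hn₀, Ne, Ideal.absNorm_eq_zero_iff]; exact hI0
    have hmem : (n₀ : 𝓞 K) ∈ I := Ideal.absNorm_mem I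
    set N : ℕ := n₀ ^ 2 + 1 with hN
    have hN0 : N ≠ 0 := by rw [hN]; exact Nat.succ_ne_zero _
    have hn₀N : n₀ < N := by
      have := Nat.le_self_pow (two_ne_zero) n₀
      omega
    refine ⟨(n₀ : K) / (N : K), ?_, ?_, ?_⟩
    · exact div_ne_zero (Nat.cast_ne_zero.mpr hn₀0) (Nat.cast_ne_zero.mpr hN0)
    · intro v hv
      have hvBf : v ∈ Bf := by rw [hBf]; exact hGoodFin.mem_toFinset.mpr hv
      have hvI : I ≤ v.asIdeal := Ideal.le_of_dvd (Finset.dvd_prod_of_mem _ hvBf)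
      have h1 : finAbs v (algebraMap (𝓞 K) K ((n₀ : ℕ) : 𝓞 K)) < 1 := by
        rw [finAbs_lt_one_iff, v.valuation_lt_one_iff_dvd, Ideal.dvd_span_singleton]
        exact hvI hmem
      rw [map_natCast] at h1
      have h2 : finAbs v ((N : K)) = 1 := by
        have hsq : finAbs v ((n₀ : K) ^ 2) < finAbs v 1 := by
          rw [finAbs_pow, finAbs_one]
          exact pow_lt_one₀ (finAbs_nonneg _ _) h1 (by norm_num)
        have hcast : ((N : ℕ) : K) = 1 + (n₀ : K) ^ 2 := by rw [hN]; push_cast; ring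
        rw [hcast, finAbs_add_eq_of_lt v hsq, finAbs_one]
      rw [finAbs_div, h2, div_one]
      exact h1
    · intro w
      have hwn : ∀ m : ℕ, w ((m : K)) = (m : ℝ) := by
        intro m
        rw [← NumberField.InfinitePlace.norm_embedding_eq, map_natCast]
        simp
      have heq : w ((n₀ : K) / (N : K)) = (n₀ : ℝ) / (N : ℝ) := by
        rw [map_div₀, hwn, hwn]
      rw [heq, div_lt_one (by exact_mod_cast Nat.pos_of_ne_zero hN0)]
      exact_mod_cast hn₀N
  set σ : ℕ → K := fun m => s1 ^ m with hσdef
  -- the finitely many bad finite places are eventually fine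
  have hev1 : ∀ᶠ m in Filter.atTop, ∀ v ∈ {v : FinPlace K | ¬ Good v}, ∀ d ∈ D,
      weil (Sum.inl v) d (Qs (σ m)) ≤ c (Sum.inl v) := by
    rw [Filter.eventually_all_finite hGoodFin]
    intro v hv
    rw [Filter.eventually_all_finset D]
    intro d hd
    obtain ⟨ε, hε, hloc⟩ := hbadfin v d hd
    have htend : Filter.Tendsto (fun m => finAbs v (σ m)) Filter.atTop (nhds 0) := by
      have heq : (fun m => finAbs v (σ m)) = fun m => (finAbs v s1) ^ m := by
        funext m; rw [hσdef]; exact finAbs_pow v s1 m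
      rw [heq]
      exact tendsto_pow_atTop_nhds_zero_of_lt_one (finAbs_nonneg v s1) (hs1fin v hv)
    filter_upwards [htend.eventually_lt_const hε] with m hm
    rw [hloc (σ m) hm]
    exact hPfin v d hd
  -- the infinite places are eventually fine
  have hev2 : ∀ᶠ m in Filter.atTop, ∀ w : NumberField.InfinitePlace K, ∀ d ∈ D,
      weil (Sum.inr w) d (Qs (σ m)) ≤ c (Sum.inr w) := by
    rw [Filter.eventually_all]
    intro w
    rw [Filter.eventually_all_finset D]
    intro d hd
    have hdd : d.rep ∉ W := hDL d hd
    have hNd : 0 < supAbs (Sum.inr w) d.rep := supAbs_pos _ d.rep_nonzero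
    have hNP : 0 < supAbs (Sum.inr w) P.rep := supAbs_pos _ P.rep_nonzero
    have hDP : 0 < supAbs (Sum.inr w) (mnr d.rep P.rep) :=
      supAbs_pos _ (mnr_ne_zero P.rep_nonzero (LinearMap.mem_range.mpr ⟨p, hp⟩) hdd)
    have hws1 : placeAbs (Sum.inr w) s1 < 1 := hs1inf w
    have hgeo : Filter.Tendsto (fun m => placeAbs (Sum.inr w) (σ m)) Filter.atTop (nhds 0) := by
      have heq : (fun m => placeAbs (Sum.inr w) (σ m))
          = fun m => (placeAbs (Sum.inr w) s1) ^ m := by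
        funext m; rw [hσdef]; exact placeAbs_pow _ s1 m
      rw [heq]
      exact tendsto_pow_atTop_nhds_zero_of_lt_one (placeAbs_nonneg _ _) hws1
    have hNt := tendsto_supAbs_add_smul (Sum.inr w) P.rep U σ hgeo
    have hDt : Filter.Tendsto
        (fun m => supAbs (Sum.inr w) (mnr d.rep (P.rep + σ m • U))) Filter.atTop
        (nhds (supAbs (Sum.inr w) (mnr d.rep P.rep))) := by
      have heq : (fun m => supAbs (Sum.inr w) (mnr d.rep (P.rep + σ m • U)))
          = fun m => supAbs (Sum.inr w) (mnr d.rep P.rep + σ m • mnr d.rep U) := by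
        funext m; rw [mnr_add_smul]
      rw [heq]
      exact tendsto_supAbs_add_smul (Sum.inr w) _ _ σ hgeo
    have hpos : 0 < supAbs (Sum.inr w) d.rep * supAbs (Sum.inr w) P.rep /
        supAbs (Sum.inr w) (mnr d.rep P.rep) := div_pos (mul_pos hNd hNP) hDP
    have hdiv : Filter.Tendsto (fun m => supAbs (Sum.inr w) d.rep *
        supAbs (Sum.inr w) (P.rep + σ m • U) /
        supAbs (Sum.inr w) (mnr d.rep (P.rep + σ m • U))) Filter.atTop
        (nhds (supAbs (Sum.inr w) d.rep * supAbs (Sum.inr w) P.rep /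
          supAbs (Sum.inr w) (mnr d.rep P.rep))) :=
      (hNt.const_mul _).div hDt (ne_of_gt hDP)
    have hlog : Filter.Tendsto (fun m => weil (Sum.inr w) d (Qs (σ m))) Filter.atTop
        (nhds (weil (Sum.inr w) d P)) := by
      have hcomp := ((Real.continuousAt_log (ne_of_gt hpos)).tendsto).comp hdiv
      have heqf : (fun m => weil (Sum.inr w) d (Qs (σ m))) = Real.log ∘
          (fun m => supAbs (Sum.inr w) d.rep * supAbs (Sum.inr w) (P.rep + σ m • U) /
            supAbs (Sum.inr w) (mnr d.rep (P.rep + σ m • U))) := by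
        funext m
        rw [Function.comp_apply, hweilQ, projNorm_eq_supAbs, projNorm_eq_supAbs,
          projDelta_eq_supAbs]
      rw [heqf]
      have heqP : weil (Sum.inr w) d P = Real.log (supAbs (Sum.inr w) d.rep *
          supAbs (Sum.inr w) P.rep / supAbs (Sum.inr w) (mnr d.rep P.rep)) := by
        unfold weil
        rw [projNorm_eq_supAbs, projNorm_eq_supAbs, projDelta_eq_supAbs]
      rw [heqP]
      exact hcomp
    filter_upwards [hlog.eventually_lt_const (hPinf w d hd)] with m hm
    exact le_of_lt hm
  obtain ⟨m₀, hm₀⟩ := Filter.eventually_atTop.mp (hev1.and hev2)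
  -- injectivity of the parameter sequence
  have hσinj : Function.Injective σ := by
    intro a b hab
    simp only [hσdef] at hab
    by_contra hne
    obtain ⟨w⟩ : Nonempty (NumberField.InfinitePlace K) := inferInstance
    have h1 : (w s1) ^ a = (w s1) ^ b := by
      rw [← map_pow, ← map_pow, hab]
    have hposw : 0 < w s1 :=
      lt_of_le_of_ne (apply_nonneg w s1) (Ne.symm ((map_ne_zero w).mpr hs1ne))
    have hltw : w s1 < 1 := hs1inf w
    rcases Nat.lt_or_ge a b with hab' | hab'
    · have := pow_lt_pow_right_of_lt_one₀ hposw hltw hab'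
      rw [h1] at this
      exact absurd this (lt_irrefl _)
    · have hab'' : b < a := by omega
      have := pow_lt_pow_right_of_lt_one₀ hposw hltw hab''
      rw [← h1] at this
      exact absurd this (lt_irrefl _)
  -- conclusion
  refine Set.infinite_of_injective_forall_mem (f := fun m : ℕ => Qs (σ (m₀ + m))) ?_ ?_
  · intro a b hab
    have := hσinj (hQinj hab)
    omega
  · intro m
    refine ⟨hQW _, ?_⟩
    intro v d hd
    obtain ⟨h1, h2⟩ := hm₀ (m₀ + m) (Nat.le_add_right m₀ m)
    cases v with
    | inl v =>
      by_cases hgv : Good v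
      · exact hgood v hgv _ (hQW _) d hd
      · exact h1 v hgv d hd
    | inr w => exact h2 w d hd
end

section
/- Let k be a number field and n ≥ 2 an integer. Let D ⊆ ℙⁿ be the codimension-two linear subspace {x₀ = x₁ = 0}, and for Q ∈ ℙⁿ(k) with (q₀,q₁) ≠ (0,0) define λ_{D,v}(Q) = log(‖Q‖_v / max(|q₀|_v, |q₁|_v)). Then there exist non-negative real numbers n_v, one for each place v of k, with n_v = 0 for all but finitely many places v, such that the set {Q ∈ ℙⁿ(k) : (q₀,q₁) ≠ (0,0) and λ_{D,v}(Q) ≤ n_v for every place v of k} is Zariski dense in ℙⁿ. (This is the instance X = ℙⁿ, D a codimension-two linear subspace, of the theorem that a variety whose generic linear section is a rational curve has a potentially dense set of everywhere D-integral points for D of codimension at least two.) -/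
open NumberField IsDedekindDomain

/-- The Weil function `λ_{D,v}(Q) = log (‖Q‖_v / max (|q₀|_v, |q₁|_v))` of the
codimension-two linear subspace `D = {x₀ = x₁ = 0}` at the place `v`, computed using the
canonical representative (mathematically it is independent of the choice of homogeneous
coordinates). -/
noncomputable def weilD {K : Type} [Field K] [NumberField K] {n : ℕ} (v : Place K)
    (Q : Projectivization K (Fin (n + 1) → K)) : ℝ :=
  Real.log (projNorm v Q.rep / max (placeAbs v (Q.rep 0)) (placeAbs v (Q.rep 1)))

/-! ### Auxiliary lemmas -/

open Polynomial in
lemma exists_nat_cast_eval_ne_zero {K : Type} [Field K] [CharZero K]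
    (φ : Polynomial K) (hφ : φ ≠ 0) (N : ℕ) :
    ∃ t : ℕ, N ≤ t ∧ φ.eval (t : K) ≠ 0 := by
  by_contra h
  push_neg at h
  have h1 : Set.InjOn (Nat.cast : ℕ → K) (Set.Ici N) :=
    fun a _ b _ hab => Nat.cast_injective hab
  have h2 : (Set.Ici N).Infinite := Set.Ici_infinite N
  have h3 : ((Nat.cast : ℕ → K) '' Set.Ici N) ⊆ {x | φ.IsRoot x} := by
    rintro _ ⟨t, ht, rfl⟩
    exact h t ht
  exact ((φ.finite_setOf_isRoot hφ).subset h3).not_infinite (h2.image h1)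

open MvPolynomial in
lemma exists_nat_grid_eval_ne_zero {K : Type} [Field K] [CharZero K] :
    ∀ (m : ℕ) (p : MvPolynomial (Fin m) K), p ≠ 0 → ∀ N : ℕ,
    ∃ z : Fin m → ℕ, (∀ i, N ≤ z i) ∧ eval (fun i => (z i : K)) p ≠ 0 := by
  intro m
  induction m with
  | zero =>
    intro p hp N
    refine ⟨fun i => N, fun i => le_rfl, ?_⟩
    have : p = C (coeff 0 p) := (p.eq_C_of_isEmpty)
    rw [this] at hp ⊢
    simpa using fun h => hp (by simp [h])
  | succ m IH =>
    intro p hp N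
    have hF : finSuccEquiv K m p ≠ 0 := by
      intro h
      apply hp
      have := congrArg (finSuccEquiv K m).symm h
      simpa using this
    have hc : (finSuccEquiv K m p).coeff (finSuccEquiv K m p).natDegree ≠ 0 :=
      Polynomial.leadingCoeff_ne_zero.mpr hF
    obtain ⟨z', hz'N, hz'⟩ := IH _ hc N
    set φ : Polynomial K := (finSuccEquiv K m p).map (eval (fun i => (z' i : K))) with hφdef
    have hφ : φ ≠ 0 := by
      intro h
      apply hz'
      have := congrArg (fun q => Polynomial.coeff q (finSuccEquiv K m p).natDegree) h
      simpa [hφdef, Polynomial.coeff_map] using this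
    obtain ⟨t, htN, ht⟩ := exists_nat_cast_eval_ne_zero φ hφ N
    refine ⟨Fin.cons t z', ?_, ?_⟩
    · intro i
      refine Fin.cases ?_ ?_ i
      · simpa using htN
      · intro j; simpa using hz'N j
    · have hfun : (fun i : Fin (m+1) => ((Fin.cons t z' : Fin (m+1) → ℕ) i : K)) =
          Fin.cons (t : K) (fun i => (z' i : K)) := by
        funext i
        refine Fin.cases ?_ ?_ i <;> simp
      rw [hfun, eval_eq_eval_mv_eval']
      exact ht

open MvPolynomial in
lemma exists_nat_grid_max_eval_ne_zero {K : Type} [Field K] [CharZero K] (m : ℕ)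
    (p : MvPolynomial (Fin (m+1)) K) (hp : p ≠ 0) :
    ∃ z : Fin (m+1) → ℕ, (∀ i, 1 ≤ z i) ∧ (∀ i, z i ≤ z 0) ∧
      eval (fun i => (z i : K)) p ≠ 0 := by
  have hF : finSuccEquiv K m p ≠ 0 := by
    intro h
    apply hp
    have := congrArg (finSuccEquiv K m).symm h
    simpa using this
  have hc : (finSuccEquiv K m p).coeff (finSuccEquiv K m p).natDegree ≠ 0 :=
    Polynomial.leadingCoeff_ne_zero.mpr hF
  obtain ⟨z', hz'N, hz'⟩ := exists_nat_grid_eval_ne_zero m _ hc 1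
  set φ : Polynomial K := (finSuccEquiv K m p).map (eval (fun i => (z' i : K))) with hφdef
  have hφ : φ ≠ 0 := by
    intro h
    apply hz'
    have := congrArg (fun q => Polynomial.coeff q (finSuccEquiv K m p).natDegree) h
    simpa [hφdef, Polynomial.coeff_map] using this
  obtain ⟨t, htN, ht⟩ := exists_nat_cast_eval_ne_zero φ hφ (max 1 (Finset.univ.sup z'))
  refine ⟨Fin.cons t z', ?_, ?_, ?_⟩
  · intro i
    refine Fin.cases ?_ ?_ i
    · simpa using le_trans (le_max_left _ _) htN
    · intro j; simpa using hz'N j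
  · intro i
    refine Fin.cases ?_ ?_ i
    · simp
    · intro j
      have h1 : z' j ≤ Finset.univ.sup z' := Finset.le_sup (Finset.mem_univ j)
      have h2 : Finset.univ.sup z' ≤ t := le_trans (le_max_right _ _) htN
      simpa using le_trans h1 h2
  · have hfun : (fun i : Fin (m+1) => ((Fin.cons t z' : Fin (m+1) → ℕ) i : K)) =
        Fin.cons (t : K) (fun i => (z' i : K)) := by
      funext i
      refine Fin.cases ?_ ?_ i <;> simp
    rw [hfun, eval_eq_eval_mv_eval']
    exact ht

open MvPolynomial in
lemma eval_mul_pow_of_isHomogeneous {K : Type} [CommRing K] {m : ℕ}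
    {f : MvPolynomial (Fin m) K} {e : ℕ} (hf : f.IsHomogeneous e) (t : K) (x : Fin m → K) :
    eval (fun i => t * x i) f = t ^ e * eval x f := by
  rw [eval_eq, eval_eq, Finset.mul_sum]
  refine Finset.sum_congr rfl fun d hd => ?_
  have hdeg : d.degree = e := by
    have := hf (mem_support_iff.mp hd)
    rwa [Finsupp.degree_eq_weight_one]
  have hsum : ∑ i ∈ d.support, d i = e := hdeg
  calc coeff d f * ∏ i ∈ d.support, (t * x i) ^ d i
      = coeff d f * ((∏ i ∈ d.support, t ^ d i) * ∏ i ∈ d.support, x i ^ d i) := by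
        rw [← Finset.prod_mul_distrib]; simp_rw [mul_pow]
    _ = t ^ e * (coeff d f * ∏ i ∈ d.support, x i ^ d i) := by
        rw [Finset.prod_pow_eq_pow_sum, hsum]; ring

open MvPolynomial in
lemma dehom_ne_zero {K : Type} [Field K] [CharZero K] {m : ℕ}
    {f : MvPolynomial (Fin (m+1)) K} {e : ℕ} (hf : f.IsHomogeneous e) (hf0 : f ≠ 0) :
    Polynomial.eval (1 : MvPolynomial (Fin m) K) (finSuccEquiv K m f) ≠ 0 := by
  intro hg
  have key : ∀ y : Fin m → K, eval (Fin.cons 1 y) f = 0 := by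
    intro y
    rw [eval_eq_eval_mv_eval', Polynomial.eval_one_map, hg, map_zero]
  apply hf0
  have hX : (X 0 : MvPolynomial (Fin (m+1)) K).IsHomogeneous 1 := isHomogeneous_X _ _
  have hmul : (f * X 0).IsHomogeneous (e + 1) := hf.mul hX
  have : f * X 0 = 0 := by
    apply hmul.eq_zero_of_forall_eval_eq_zero
    intro x
    rw [map_mul, eval_X]
    by_cases hx0 : x 0 = 0
    · rw [hx0, mul_zero]
    · have hx : x = fun j =>
          x 0 * (Fin.cons (1:K) (fun i => x i.succ * (x 0)⁻¹) : Fin (m+1) → K) j := by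
        funext j
        refine Fin.cases ?_ ?_ j
        · simp
        · intro i
          rw [Fin.cons_succ, mul_comm (x i.succ), mul_inv_cancel_left₀ hx0]
      rw [show eval x f = 0 from ?_, zero_mul]
      conv_lhs => rw [hx]
      rw [eval_mul_pow_of_isHomogeneous hf, key, mul_zero]
  rcases mul_eq_zero.mp this with h | h
  · exact h
  · exact absurd h (X_ne_zero 0)

section PlaceAbs

variable {K : Type} [Field K] [NumberField K]

lemma placeAbs_one (v : Place K) : placeAbs v 1 = 1 := by
  cases v with
  | inl v => simp only [placeAbs, finAbs, map_one, NNReal.coe_one]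
  | inr w => exact w.1.map_one

lemma infPlace_natCast (w : NumberField.InfinitePlace K) (m : ℕ) : w ((m : K)) = (m : ℝ) := by
  rw [← NumberField.InfinitePlace.norm_embedding_eq, map_natCast]
  simp

lemma placeAbs_unit_pos (v : Place K) (a : Kˣ) : 0 < placeAbs v (a : K) := by
  refine lt_of_le_of_ne (placeAbs_nonneg v _) (Ne.symm ?_)
  intro h
  have h1 : placeAbs v ((a : K) * ((a⁻¹ : Kˣ) : K)) = 1 := by
    rw [show (a : K) * ((a⁻¹ : Kˣ) : K) = 1 by simp, placeAbs_one]
  rw [placeAbs_mul, h, zero_mul] at h1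
  exact zero_ne_one h1

end PlaceAbs

/-- Let `k` be a number field, `n ≥ 2`, `D = {x₀ = x₁ = 0} ⊆ ℙⁿ` and
`λ_{D,v}(Q) = log (‖Q‖_v / max (|q₀|_v, |q₁|_v))`. Then there exist non-negative reals
`n_v`, one for each place `v` of `k`, with `n_v = 0` for all but finitely many places,
such that the set `{Q ∈ ℙⁿ(k) : (q₀, q₁) ≠ (0, 0) and λ_{D,v}(Q) ≤ n_v for every place v}`
is Zariski dense in `ℙⁿ`; i.e., for every nonzero homogeneous polynomial `f` there is a
point `Q` of the set with `f(Q) ≠ 0`. -/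
theorem dense_everywhere_integral_points_codim_two
    (K : Type) [Field K] [NumberField K] (n : ℕ) (hn : 2 ≤ n) :
    ∃ c : Place K → ℝ, (∀ v, 0 ≤ c v) ∧ {v : Place K | c v ≠ 0}.Finite ∧
      ∀ (f : MvPolynomial (Fin (n + 1)) K), f ≠ 0 → ∀ e : ℕ, f.IsHomogeneous e →
        ∃ Q : Projectivization K (Fin (n + 1) → K),
          (¬(Q.rep 0 = 0 ∧ Q.rep 1 = 0) ∧ ∀ v : Place K, weilD v Q ≤ c v) ∧
          MvPolynomial.eval Q.rep f ≠ 0 := by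
  refine ⟨fun _ => 0, fun v => le_rfl, by simp, ?_⟩
  intro f hf e he
  obtain ⟨m, rfl⟩ : ∃ m, n = m + 1 := ⟨n - 1, by omega⟩
  set g : MvPolynomial (Fin (m+1)) K :=
    Polynomial.eval (1 : MvPolynomial (Fin (m+1)) K)
      (MvPolynomial.finSuccEquiv K (m+1) f) with hg
  have hg0 : g ≠ 0 := dehom_ne_zero he hf
  obtain ⟨z, hz1, hzmax, hz⟩ := exists_nat_grid_max_eval_ne_zero (K := K) m g hg0
  set q : Fin (m+1+1) → K := Fin.cons 1 (fun i => (z i : K)) with hqdef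
  have hq0 : q 0 = 1 := rfl
  have hq1 : q 1 = (z 0 : K) := by
    rw [show (1 : Fin (m+1+1)) = Fin.succ 0 from (Fin.succ_zero_eq_one).symm, hqdef,
      Fin.cons_succ]
  have hqne : q ≠ 0 := by
    intro h
    have : q 0 = 0 := by rw [h]; rfl
    rw [hq0] at this
    exact one_ne_zero this
  set Q := Projectivization.mk K q hqne with hQ
  obtain ⟨a, ha⟩ := Projectivization.exists_smul_eq_mk_rep K q hqne
  have hrep : ∀ j, Q.rep j = (a : K) * q j := by
    intro j
    rw [hQ, ← ha, Pi.smul_apply, Units.smul_def, smul_eq_mul]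
  have hevq : MvPolynomial.eval q f ≠ 0 := by
    have hcast : (fun i : Fin (m+1+1) => q i) = Fin.cons (1:K) (fun i => (z i : K)) := rfl
    have : MvPolynomial.eval q f = MvPolynomial.eval (fun i => (z i : K)) g := by
      rw [hqdef, MvPolynomial.eval_eq_eval_mv_eval', hg, Polynomial.eval_one_map]
    rw [this]
    exact hz
  refine ⟨Q, ⟨?_, ?_⟩, ?_⟩
  · rintro ⟨h0, -⟩
    rw [hrep 0, hq0, mul_one] at h0
    exact a.ne_zero h0
  · intro v
    have hA := placeAbs_nonneg v
    have haApos : 0 < placeAbs v (a : K) := placeAbs_unit_pos v a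
    set M := max (placeAbs v (q 0)) (placeAbs v (q 1)) with hM
    have hM1 : (1:ℝ) ≤ M := by
      rw [hM, hq0, placeAbs_one]
      exact le_max_left _ _
    have hMpos : 0 < M := lt_of_lt_of_le one_pos hM1
    have hMq : ∀ j, placeAbs v (q j) ≤ M := by
      intro j
      refine Fin.cases ?_ ?_ j
      · exact le_max_left _ _
      · intro i
        have hqsucc : q i.succ = (z i : K) := by rw [hqdef, Fin.cons_succ]
        rw [hqsucc]
        cases v with
        | inl v =>
          exact le_trans (finAbs_natCast_le_one v (z i)) hM1
        | inr w =>
          have h1 : placeAbs (Sum.inr w) ((z i : K)) = (z i : ℝ) := infPlace_natCast w (z i)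
          have h2 : placeAbs (Sum.inr w) ((z 0 : K)) = (z 0 : ℝ) := infPlace_natCast w (z 0)
          rw [h1]
          calc ((z i : ℝ)) ≤ (z 0 : ℝ) := by exact_mod_cast hzmax i
            _ = placeAbs (Sum.inr w) (q 1) := by rw [hq1, h2]
            _ ≤ M := le_max_right _ _
    have hrepabs : ∀ j, placeAbs v (Q.rep j) = placeAbs v (a : K) * placeAbs v (q j) :=
      fun j => by rw [hrep j, placeAbs_mul]
    have hsup : projNorm v Q.rep ≤ placeAbs v (a : K) * M := by
      refine ciSup_le fun j => ?_
      rw [hrepabs j]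
      exact mul_le_mul_of_nonneg_left (hMq j) (le_of_lt haApos)
    have hden : max (placeAbs v (Q.rep 0)) (placeAbs v (Q.rep 1))
        = placeAbs v (a : K) * M := by
      rw [hrepabs 0, hrepabs 1, hM]
      exact (mul_max_of_nonneg _ _ (le_of_lt haApos)).symm
    have hdenpos : 0 < placeAbs v (a : K) * M := mul_pos haApos hMpos
    show weilD v Q ≤ 0
    rw [weilD, hden]
    apply Real.log_nonpos
    · apply div_nonneg _ (le_of_lt hdenpos)
      exact Real.iSup_nonneg fun j => hA _
    · rw [div_le_one hdenpos]
      exact hsup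
  · have hrepfun : Q.rep = fun j => (a : K) * q j := funext hrep
    rw [hrepfun, eval_mul_pow_of_isHomogeneous he]
    exact mul_ne_zero (pow_ne_zero _ a.ne_zero) hevq
end
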